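/- Let P be a finite set of pairs of points in the Euclidean plane, let l = (s_l, t_l) ∈ P be a regular pair, and let p and q be vertices of the Hanan grid H(P) lying in the bounding box B(l) with p ≤ q. Then the maximum, over all Manhattan paths π_l ∈ Π_P(l) and π_v ∈ Π_P(p,q), of the length ‖π_l ∩ π_v‖ of their common part equals the Manhattan distance d(p,q) = d_x(p,q) + d_y(p,q). (Lemma 3.1(1).) -/

import Mathlib

noncomputable section
open scoped Classical

/-- A point in the Euclidean plane. -/
abbrev Point : Type := ℝ × ℝ

/-- The Manhattan distance `d(p, q)`. -/
def manh (p q : Point) : ℝ := |p.1 - q.1| + |p.2 - q.2|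

/-- The Euclidean length `‖pq‖` of the segment between `p` and `q`. -/
def euclen (p q : Point) : ℝ := Real.sqrt ((p.1 - q.1) ^ 2 + (p.2 - q.2) ^ 2)

/-- The segment `pq` is axis-aligned. -/
def axisAligned (p q : Point) : Prop := p.1 = q.1 ∨ p.2 = q.2

/-- `z` lies in the bounding box `B(a, b)` (componentwise between `a ⊓ b` and `a ⊔ b`). -/
def inBox (a b z : Point) : Prop := a ⊓ b ≤ z ∧ z ≤ a ⊔ b

lemma euclen_comm (p q : Point) : euclen p q = euclen q p := by
  unfold euclen; ring_nf

/-- Length of an (unordered) edge. -/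
def sym2Len : Sym2 Point → ℝ := Sym2.lift ⟨euclen, euclen_comm⟩

/-- The length of a network, given by its (finite) edge set. -/
def netLength (N : Finset (Sym2 Point)) : ℝ := ∑ e ∈ N, sym2Len e

/-- A (simple) path in the plane, given by its sequence of (distinct) vertices. -/
structure GPath where
  k : ℕ
  pts : Fin (k + 1) → Point
  inj : Function.Injective pts

/-- The `i`-th edge of a path. -/
def GPath.edge (π : GPath) (i : Fin π.k) : Sym2 Point :=
  s(π.pts i.castSucc, π.pts i.succ)

/-- The edge set of a path. -/
def GPath.edges (π : GPath) : Finset (Sym2 Point) :=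
  Finset.image π.edge Finset.univ

/-- The total (Euclidean) length of a path. -/
def GPath.length (π : GPath) : ℝ :=
  ∑ i : Fin π.k, euclen (π.pts i.castSucc) (π.pts i.succ)

/-- `π` is a Manhattan path (M-path) for the pair `(s, t)`: an `s`–`t` path all of whose
edges are axis-aligned and whose total length equals the Manhattan distance `d(s, t)`. -/
def IsMPath (s t : Point) (π : GPath) : Prop :=
  π.pts 0 = s ∧ π.pts (Fin.last π.k) = t ∧
  (∀ i : Fin π.k, axisAligned (π.pts i.castSucc) (π.pts i.succ)) ∧
  π.length = manh s t

/-- A GMMN instance: a finite set of pairs of points. -/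
abbrev Inst : Type := Finset (Point × Point)

/-- The vertex set of the Hanan grid `H(P)`. -/
def hananV (P : Inst) : Finset Point :=
  ((P.image fun v => v.1.1) ∪ (P.image fun v => v.2.1)) ×ˢ
  ((P.image fun v => v.1.2) ∪ (P.image fun v => v.2.2))

/-- `{p, q}` is an edge of the Hanan grid `H(P)`: an axis-aligned segment between two distinct
grid vertices containing no third grid vertex. -/
def IsHananEdge (P : Inst) (p q : Point) : Prop :=
  p ∈ hananV P ∧ q ∈ hananV P ∧ p ≠ q ∧ axisAligned p q ∧
  ∀ z ∈ hananV P, inBox p q z → z = p ∨ z = q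

/-- All edges of the path `π` are edges of the Hanan grid `H(P)`. -/
def OnGrid (P : Inst) (π : GPath) : Prop :=
  ∀ i : Fin π.k, IsHananEdge P (π.pts i.castSucc) (π.pts i.succ)

/-- `π ∈ Π_P(u)`: an M-path for the pair `u` that is a subgraph of the Hanan grid `H(P)`. -/
def InPi (P : Inst) (u : Point × Point) (π : GPath) : Prop :=
  IsMPath u.1 u.2 π ∧ OnGrid P π

/-- The network `∪_{v ∈ P} π_v` determined by a choice of M-paths. -/
def netOf (P : Inst) (f : Point × Point → GPath) : Finset (Sym2 Point) :=
  P.biUnion fun v => (f v).edges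

/-- `f` gives a feasible solution in `Feas(P)`: an M-path on the Hanan grid for each pair. -/
def IsFeasChoice (P : Inst) (f : Point × Point → GPath) : Prop :=
  ∀ v ∈ P, InPi P v (f v)

/-- `f` gives an optimal solution in `Opt(P)`. -/
def IsOptChoice (P : Inst) (f : Point × Point → GPath) : Prop :=
  IsFeasChoice P f ∧
  ∀ g : Point × Point → GPath, IsFeasChoice P g →
    netLength (netOf P f) ≤ netLength (netOf P g)

/-- Adjacency in the intersection graph `IG[P]`: `u ≠ v` and the induced subgrids
`H(P, u)` and `H(P, v)` share an edge. -/
def IGAdj (P : Inst) (u v : Point × Point) : Prop :=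
  u ≠ v ∧ ∃ p q : Point, IsHananEdge P p q ∧
    inBox u.1 u.2 p ∧ inBox u.1 u.2 q ∧ inBox v.1 v.2 p ∧ inBox v.1 v.2 q

/-- The total length `‖π₁ ∩ π₂‖` of the segments shared by two paths. -/
def sharedLen (π₁ π₂ : GPath) : ℝ := netLength (π₁.edges ∩ π₂.edges)

/-- A pair `(p, q)` with `p_x ≤ q_x` is regular if `p_y ≤ q_y`. -/
def Regular (u : Point × Point) : Prop := u.1.1 ≤ u.2.1 ∧ u.1.2 ≤ u.2.2

/-- A pair `(p, q)` with `p_x ≤ q_x` is flipped if `p_y ≥ q_y`. -/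
def Flipped (u : Point × Point) : Prop := u.1.1 ≤ u.2.1 ∧ u.2.2 ≤ u.1.2

/-- The intersection graph `IG[P]` as a simple graph on the pairs of `P`. -/
def IG (P : Inst) : SimpleGraph {v : Point × Point // v ∈ P} where
  Adj u v := IGAdj P u.1 v.1
  symm := by
    constructor
    rintro u v ⟨hne, p, q, he, h1, h2, h3, h4⟩
    exact ⟨hne.symm, p, q, he, h3, h4, h1, h2⟩
  loopless := by
    constructor
    intro u h
    exact h.1 rfl


namespace Lemma31Aux

open List

def Xs (P : Inst) : Finset ℝ := (P.image fun v => v.1.1) ∪ (P.image fun v => v.2.1)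
def Ys (P : Inst) : Finset ℝ := (P.image fun v => v.1.2) ∪ (P.image fun v => v.2.2)

lemma mem_hananV {P : Inst} {z : Point} : z ∈ hananV P ↔ z.1 ∈ Xs P ∧ z.2 ∈ Ys P :=
  Finset.mem_product

lemma sym2Len_nonneg (e : Sym2 Point) : 0 ≤ sym2Len e := by
  induction e using Sym2.ind with
  | _ a b => simpa [sym2Len, euclen] using Real.sqrt_nonneg _

lemma netLength_mono {N M : Finset (Sym2 Point)} (h : N ⊆ M) : netLength N ≤ netLength M :=
  Finset.sum_le_sum_of_subset_of_nonneg h fun e _ _ => sym2Len_nonneg e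

lemma edge_inj (π : GPath) : Function.Injective π.edge := by
  intro i j hij
  rw [GPath.edge, GPath.edge, Sym2.eq_iff] at hij
  rcases hij with ⟨h1, _⟩ | ⟨h1, h2⟩
  · have := π.inj h1
    exact Fin.castSucc_injective _ this
  · have e1 := congrArg Fin.val (π.inj h1)
    have e2 := congrArg Fin.val (π.inj h2)
    simp at e1 e2
    omega

lemma netLength_edges (π : GPath) : netLength π.edges = π.length := by
  rw [netLength, GPath.edges,
    Finset.sum_image (fun i _ j _ h => edge_inj π h)]
  simp [GPath.length, GPath.edge, sym2Len]

/-- `x` and `x'` are consecutive elements of `S`. -/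
def adjIn (S : Finset ℝ) (x x' : ℝ) : Prop :=
  x ∈ S ∧ x' ∈ S ∧ x < x' ∧ ∀ z ∈ S, x ≤ z → z ≤ x' → z = x ∨ z = x'

/-- A Hanan edge oriented increasingly. -/
def Rel (P : Inst) (z w : Point) : Prop := IsHananEdge P z w ∧ z ≤ w

def seg (S : Finset ℝ) (a b : ℝ) : List ℝ := (S.filter fun x => a ≤ x ∧ x < b).sort (· ≤ ·)

def segc (S : Finset ℝ) (a b : ℝ) : List ℝ := (S.filter fun x => a ≤ x ∧ x ≤ b).sort (· ≤ ·)

/-- The monotone staircase from `a` to `b` (excluding `b`). -/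
def stair (P : Inst) (a b : Point) : List Point :=
  (seg (Xs P) a.1 b.1).map (fun x => (x, a.2)) ++ (seg (Ys P) a.2 b.2).map (fun y => (b.1, y))

lemma chain'_adjIn_sort (T : Finset ℝ) : List.Chain' (adjIn T) (T.sort (· ≤ ·)) := by
  unfold List.Chain'
  rw [List.isChain_iff_getElem]
  intro i h
  have hs : (T.sort (· ≤ ·)).SortedLT := T.sortedLT_sort
  refine ⟨(Finset.mem_sort _).1 (List.getElem_mem _),
    (Finset.mem_sort _).1 (List.getElem_mem _),
    hs.strictMono_get (show (⟨i, by omega⟩ : Fin _) < ⟨i + 1, h⟩ by simp [Fin.lt_def]), ?_⟩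
  intro z hz h1 h2
  obtain ⟨j, rfl⟩ := List.mem_iff_get.1 ((Finset.mem_sort (α := ℝ) (· ≤ ·)).2 hz)
  rcases le_or_gt (j : ℕ) i with hj | hj
  · left
    refine le_antisymm (hs.strictMono_get.monotone (show j ≤ ⟨i, by omega⟩ from ?_)) h1
    simpa [Fin.le_def] using hj
  · right
    refine le_antisymm h2 (hs.strictMono_get.monotone (show (⟨i + 1, h⟩ : Fin _) ≤ j from ?_))
    simp [Fin.le_def]; omega

lemma chain'_adjIn_segc (S : Finset ℝ) (a b : ℝ) :
    List.Chain' (adjIn S) (segc S a b) := by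
  refine (chain'_adjIn_sort (S.filter fun x => a ≤ x ∧ x ≤ b)).imp ?_
  rintro x x' ⟨hx, hx', hlt, hbtw⟩
  rw [Finset.mem_filter] at hx hx'
  exact ⟨hx.1, hx'.1, hlt, fun z hz h1 h2 =>
    hbtw z (Finset.mem_filter.2 ⟨hz, le_trans hx.2.1 h1, le_trans h2 hx'.2.2⟩) h1 h2⟩

lemma segc_eq (S : Finset ℝ) {a b : ℝ} (hb : b ∈ S) (hab : a ≤ b) :
    segc S a b = seg S a b ++ [b] := by
  haveI : IsAntisymm ℝ (· < ·) := ⟨fun a b h1 h2 => absurd h2 (asymm h1)⟩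
  have hnd1 : (segc S a b).Nodup := Finset.sort_nodup _ (· ≤ ·)
  have hnd2 : (seg S a b ++ [b]).Nodup := by
    rw [List.nodup_append]
    refine ⟨Finset.sort_nodup _ (· ≤ ·), List.nodup_singleton b, ?_⟩
    intro x hx
    simp only [seg, Finset.mem_sort, Finset.mem_filter] at hx
    simp only [List.mem_singleton]
    rintro y hy hxb
    rw [hy] at hxb
    exact absurd (hxb ▸ hx.2.2) (lt_irrefl b)
  refine (fun hp h1 h2 => List.Perm.eq_of_pairwise' (r := fun x y : ℝ => x < y) h1 h2 hp)
    ((List.perm_ext_iff_of_nodup hnd1 hnd2).2 ?_) ?_ ?_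
  · intro x
    simp only [segc, seg, Finset.mem_sort, Finset.mem_filter, List.mem_append,
      List.mem_singleton]
    constructor
    · rintro ⟨hxS, hax, hxb⟩
      rcases lt_or_eq_of_le hxb with h | h
      · exact Or.inl ⟨hxS, hax, h⟩
      · exact Or.inr h
    · rintro (⟨hxS, hax, hxb⟩ | rfl)
      · exact ⟨hxS, hax, le_of_lt hxb⟩
      · exact ⟨hb, hab, le_rfl⟩
  · exact (Finset.sortedLT_sort _).pairwise
  · refine List.pairwise_append.2 ⟨(Finset.sortedLT_sort _).pairwise, List.pairwise_singleton _ b, ?_⟩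
    intro x hx y hy
    simp only [seg, Finset.mem_sort, Finset.mem_filter] at hx
    simp only [List.mem_singleton] at hy
    exact hy ▸ hx.2.2

lemma seg_nil (S : Finset ℝ) {a b : ℝ} (h : b ≤ a) : seg S a b = [] := by
  rw [seg]
  convert Finset.sort_empty (α := ℝ) (· ≤ ·)
  rw [Finset.filter_eq_empty_iff]
  rintro x _ ⟨h1, h2⟩
  exact absurd (lt_of_lt_of_le h2 (le_trans h h1)) (lt_irrefl x)

lemma seg_head (S : Finset ℝ) {a b : ℝ} (ha : a ∈ S) (hab : a < b) :
    ∃ t, seg S a b = a :: t := by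
  have hmem : a ∈ seg S a b := by
    simp only [seg, Finset.mem_sort, Finset.mem_filter]
    exact ⟨ha, le_rfl, hab⟩
  cases hl : seg S a b with
  | nil => rw [hl] at hmem; simp at hmem
  | cons h t =>
    have hs : (seg S a b).Pairwise (· < ·) := (Finset.sortedLT_sort _).pairwise
    rw [hl, List.pairwise_cons] at hs
    have hh : h ∈ seg S a b := by rw [hl]; exact List.mem_cons_self
    simp only [seg, Finset.mem_sort, Finset.mem_filter] at hh
    rw [hl] at hmem
    rcases List.mem_cons.1 hmem with rfl | hmem'
    · exact ⟨t, rfl⟩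
    · exact absurd (hs.1 a hmem') (not_lt.2 hh.2.1)

lemma head?_seg_map_append {S : Finset ℝ} {a b : ℝ} (ha : a ∈ S) (hab : a ≤ b)
    (f : ℝ → Point) {r : List Point} (hr : r.head? = some (f b)) :
    ((seg S a b).map f ++ r).head? = some (f a) := by
  rcases eq_or_lt_of_le hab with rfl | h
  · rw [seg_nil S le_rfl]; simpa using hr
  · obtain ⟨t, ht⟩ := seg_head S ha h
    rw [ht]; simp

lemma rel_horiz (P : Inst) {y : ℝ} (hy : y ∈ Ys P) {x x' : ℝ} (h : adjIn (Xs P) x x') :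
    Rel P (x, y) (x', y) := by
  obtain ⟨hx, hx', hlt, hbtw⟩ := h
  refine ⟨⟨mem_hananV.2 ⟨hx, hy⟩, mem_hananV.2 ⟨hx', hy⟩, ?_, Or.inr rfl, ?_⟩,
    le_of_lt hlt, le_rfl⟩
  · intro he
    exact absurd (congrArg Prod.fst he) (ne_of_lt hlt)
  · rintro z hz ⟨h1, h2⟩
    have hb1 : x ≤ z.1 := by
      have := h1.1; simpa [min_eq_left (le_of_lt hlt)] using this
    have hb2 : z.1 ≤ x' := by
      have := h2.1; simpa [max_eq_right (le_of_lt hlt)] using this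
    have hzy : z.2 = y := by
      have hl := h1.2; have hu := h2.2
      have : y ⊓ y ≤ z.2 := hl
      have h2' : z.2 ≤ y ⊔ y := hu
      simp at this h2'
      linarith
    rcases hbtw z.1 (mem_hananV.1 hz).1 hb1 hb2 with h | h
    · left; exact Prod.ext h hzy
    · right; exact Prod.ext h hzy

lemma rel_vert (P : Inst) {x : ℝ} (hx : x ∈ Xs P) {y y' : ℝ} (h : adjIn (Ys P) y y') :
    Rel P (x, y) (x, y') := by
  obtain ⟨hy, hy', hlt, hbtw⟩ := h
  refine ⟨⟨mem_hananV.2 ⟨hx, hy⟩, mem_hananV.2 ⟨hx, hy'⟩, ?_, Or.inl rfl, ?_⟩,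
    le_rfl, le_of_lt hlt⟩
  · intro he
    exact absurd (congrArg Prod.snd he) (ne_of_lt hlt)
  · rintro z hz ⟨h1, h2⟩
    have hb1 : y ≤ z.2 := by
      have := h1.2; simpa [min_eq_left (le_of_lt hlt)] using this
    have hb2 : z.2 ≤ y' := by
      have := h2.2; simpa [max_eq_right (le_of_lt hlt)] using this
    have hzx : z.1 = x := by
      have hl := h1.1; have hu := h2.1
      have : x ⊓ x ≤ z.1 := hl
      have h2' : z.1 ≤ x ⊔ x := hu
      simp at this h2'
      linarith
    rcases hbtw z.2 (mem_hananV.1 hz).2 hb1 hb2 with h | h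
    · left; exact Prod.ext hzx h
    · right; exact Prod.ext hzx h

lemma chain'_map_seg {P : Inst} {S : Finset ℝ} {a b : ℝ} (hb : b ∈ S) (hab : a ≤ b)
    (f : ℝ → Point) (hf : ∀ x x', adjIn S x x' → Rel P (f x) (f x'))
    {r : List Point} (hr : List.Chain' (Rel P) r) (hrh : r.head? = some (f b)) :
    List.Chain' (Rel P) ((seg S a b).map f ++ r) := by
  have hc : List.Chain' (adjIn S) (seg S a b ++ [b]) := by
    rw [← segc_eq S hb hab]; exact chain'_adjIn_segc S a b
  unfold List.Chain' at hc ⊢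
  rw [List.isChain_append] at hc
  obtain ⟨h1, -, h3⟩ := hc
  rw [List.isChain_append]
  refine ⟨(List.isChain_map f).2 (h1.imp fun a b hx => hf a b hx), hr, ?_⟩
  intro x hx y hy
  rw [List.getLast?_map] at hx
  rcases Option.map_eq_some_iff.1 hx with ⟨x0, hx0, rfl⟩
  rw [hrh] at hy
  simp only [Option.mem_def, Option.some_inj] at hy
  subst hy
  exact hf _ _ (h3 x0 hx0 b rfl)

lemma chain'_stair_append (P : Inst) {a b : Point} (ha : a ∈ hananV P) (hb : b ∈ hananV P)
    (hab : a ≤ b) {r : List Point} (hr : List.Chain' (Rel P) r) (hrh : r.head? = some b) :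
    List.Chain' (Rel P) (stair P a b ++ r) := by
  rw [stair, List.append_assoc]
  refine chain'_map_seg (mem_hananV.1 hb).1 hab.1 _
    (fun x x' hx => rel_horiz P (mem_hananV.1 ha).2 hx) ?_ ?_
  · refine chain'_map_seg (mem_hananV.1 hb).2 hab.2 _
      (fun y y' hy => rel_vert P (mem_hananV.1 hb).1 hy) hr ?_
    rw [hrh]
  · exact head?_seg_map_append (mem_hananV.1 ha).2 hab.2 _ (by rw [hrh])

lemma head?_stair_append (P : Inst) {a b : Point} (ha : a ∈ hananV P) (hab : a ≤ b)
    {r : List Point} (hr : r.head? = some b) :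
    (stair P a b ++ r).head? = some a := by
  rw [stair, List.append_assoc]
  have hinner : ((seg (Ys P) a.2 b.2).map (fun y => (b.1, y)) ++ r).head? = some (b.1, a.2) := by
    exact head?_seg_map_append (mem_hananV.1 ha).2 hab.2 _ (by rw [hr])
  rcases eq_or_lt_of_le hab.1 with he | hlt
  · rw [seg_nil (Xs P) (le_of_eq he.symm)]
    simp only [List.map_nil, List.nil_append]
    rw [hinner, ← he]
  · have := head?_seg_map_append (mem_hananV.1 ha).1 hab.1 (fun x => (x, a.2))
      (r := (seg (Ys P) a.2 b.2).map (fun y => (b.1, y)) ++ r) (by rw [hinner])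
    exact this

lemma rel_sum_lt {P : Inst} {z w : Point} (h : Rel P z w) : z.1 + z.2 < w.1 + w.2 := by
  obtain ⟨⟨_, _, hne, _, _⟩, h1, h2⟩ := h
  rcases lt_or_eq_of_le h1 with h1' | h1'
  · linarith
  · rcases lt_or_eq_of_le h2 with h2' | h2'
    · linarith
    · exact absurd (Prod.ext h1' h2') hne

lemma nodup_of_chain {P : Inst} {L : List Point} (hc : List.Chain' (Rel P) L) : L.Nodup := by
  have h2 : List.Chain' (fun z w : Point => z.1 + z.2 < w.1 + w.2) L :=
    hc.imp fun a b h => rel_sum_lt h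
  haveI : Trans (fun z w : Point => z.1 + z.2 < w.1 + w.2)
      (fun z w : Point => z.1 + z.2 < w.1 + w.2) (fun z w : Point => z.1 + z.2 < w.1 + w.2) :=
    ⟨lt_trans⟩
  refine (List.isChain_iff_pairwise.1 h2).imp ?_
  intro a b h heq
  rw [heq] at h
  exact lt_irrefl _ h

def ofList (L : List Point) (h : L ≠ []) (hnd : L.Nodup) : GPath where
  k := L.length - 1
  pts i := L.get (Fin.cast (Nat.succ_pred_eq_of_pos (List.length_pos_iff.2 h)) i)
  inj := fun i j hij => by
    have := List.nodup_iff_injective_get.1 hnd hij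
    simpa [Fin.ext_iff] using this

lemma ofList_pts (L : List Point) (h : L ≠ []) (hnd : L.Nodup) (i : Fin (L.length - 1 + 1)) :
    (ofList L h hnd).pts i = L.get (Fin.cast (Nat.succ_pred_eq_of_pos (List.length_pos_iff.2 h)) i) :=
  rfl

lemma get_zero_of_head? {L : List Point} {x : Point} (hL : L.head? = some x) (h : 0 < L.length) :
    L.get ⟨0, h⟩ = x := by
  cases L with
  | nil => simp at h
  | cons a t => simp at hL ⊢; exact hL

lemma euclen_of_rel {z w : Point} (hax : axisAligned z w) (hle : z ≤ w) :
    euclen z w = (w.1 - z.1) + (w.2 - z.2) := by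
  rcases hax with h | h
  · have he : (z.1 - w.1) ^ 2 + (z.2 - w.2) ^ 2 = (w.2 - z.2) ^ 2 := by rw [h]; ring
    rw [euclen, he, Real.sqrt_sq (sub_nonneg.2 hle.2), h]; ring
  · have he : (z.1 - w.1) ^ 2 + (z.2 - w.2) ^ 2 = (w.1 - z.1) ^ 2 := by rw [h]; ring
    rw [euclen, he, Real.sqrt_sq (sub_nonneg.2 hle.1), h]; ring

lemma length_ofList {P : Inst} {L : List Point} (h : L ≠ []) (hnd : L.Nodup)
    (hc : List.Chain' (Rel P) L) :
    (ofList L h hnd).length =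
      ((L.getLast h).1 + (L.getLast h).2) - ((L.head h).1 + (L.head h).2) := by
  classical
  have hpos : 0 < L.length := List.length_pos_iff.2 h
  set n := L.length - 1 with hn
  have hLn : L.length = n + 1 := (Nat.succ_pred_eq_of_pos hpos).symm
  set F : ℕ → ℝ := fun j => (L.getD j (0, 0)).1 + (L.getD j (0, 0)).2 with hF
  have hstep : ∀ i : Fin n, euclen ((ofList L h hnd).pts i.castSucc)
      ((ofList L h hnd).pts i.succ) = F (i + 1) - F i := by
    intro i
    have hi1 : (i : ℕ) < L.length := by omega
    have hi2 : (i : ℕ) + 1 < L.length := by omega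
    have hrel : Rel P (L.get ⟨i, hi1⟩) (L.get ⟨i + 1, hi2⟩) := by
      have := List.isChain_iff_getElem.1 hc i (by omega)
      convert this using 2 <;> rfl
    have e1 : (ofList L h hnd).pts i.castSucc = L.get ⟨i, hi1⟩ := by
      rw [ofList_pts]; congr 1
    have e2 : (ofList L h hnd).pts i.succ = L.get ⟨i + 1, hi2⟩ := by
      rw [ofList_pts]; congr 1
    rw [e1, e2, euclen_of_rel hrel.1.2.2.2.1 hrel.2]
    simp only [hF, List.getD_eq_getElem _ _ hi1, List.getD_eq_getElem _ _ hi2,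
      List.get_eq_getElem]
    ring
  rw [GPath.length]
  have : ∑ i : Fin ((ofList L h hnd).k), euclen ((ofList L h hnd).pts i.castSucc)
      ((ofList L h hnd).pts i.succ) = ∑ i : Fin n, (F (i + 1) - F i) := by
    refine Finset.sum_congr rfl ?_
    intro i _
    exact hstep i
  rw [this, Fin.sum_univ_eq_sum_range (fun i => F (i + 1) - F i) n, Finset.sum_range_sub F n]
  have hFn : F n = (L.getLast h).1 + (L.getLast h).2 := by
    have hn' : n < L.length := by omega
    rw [hF]
    simp only [List.getD_eq_getElem _ _ hn']
    rw [List.getLast_eq_getElem]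
  have hF0 : F 0 = (L.head h).1 + (L.head h).2 := by
    rw [hF]
    simp only [List.getD_eq_getElem _ _ hpos]
    rw [← List.head_eq_getElem]
  rw [hFn, hF0]

lemma head_eq_of_head? {L : List Point} {x : Point} (h : L ≠ []) (hx : L.head? = some x) :
    L.head h = x := by
  cases L with
  | nil => exact absurd rfl h
  | cons a t => simpa using hx

lemma isMPath_ofList {P : Inst} {L : List Point} {s t : Point} (h : L ≠ []) (hnd : L.Nodup)
    (hc : List.Chain' (Rel P) L) (hhead : L.head h = s) (hlast : L.getLast h = t)
    (hst : s ≤ t) : IsMPath s t (ofList L h hnd) ∧ OnGrid P (ofList L h hnd) := by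
  have hpos : 0 < L.length := List.length_pos_iff.2 h
  have hrel : ∀ i : Fin ((ofList L h hnd).k),
      Rel P ((ofList L h hnd).pts i.castSucc) ((ofList L h hnd).pts i.succ) := by
    intro i
    have hi1 : (i : ℕ) < L.length := by
      have := i.2; simp only [ofList] at this; omega
    have hi2 : (i : ℕ) + 1 < L.length := by
      have := i.2; simp only [ofList] at this; omega
    have hrel : Rel P (L.get ⟨i, hi1⟩) (L.get ⟨i + 1, hi2⟩) := by
      have := List.isChain_iff_getElem.1 hc i (by omega)
      convert this using 2 <;> rfl
    have e1 : (ofList L h hnd).pts i.castSucc = L.get ⟨i, hi1⟩ := by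
      rw [ofList_pts L h hnd i.castSucc]; congr 1
    have e2 : (ofList L h hnd).pts i.succ = L.get ⟨i + 1, hi2⟩ := by
      rw [ofList_pts L h hnd i.succ]; congr 1
    rw [e1, e2]; exact hrel
  refine ⟨⟨?_, ?_, fun i => (hrel i).1.2.2.2.1, ?_⟩, fun i => (hrel i).1⟩
  · change L[0]'hpos = s
    rw [List.getElem_zero]
    exact hhead
  · change L[L.length - 1]'(by omega) = t
    rw [← hlast, List.getLast_eq_getElem]
  · rw [length_ofList h hnd hc, hhead, hlast, manh,
      abs_of_nonpos (by linarith [hst.1]), abs_of_nonpos (by linarith [hst.2])]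
    ring

lemma edge_ofList (L : List Point) (h : L ≠ []) (hnd : L.Nodup) (i : Fin ((ofList L h hnd).k))
    (hi : (i : ℕ) + 1 < L.length) :
    (ofList L h hnd).edge i = s(L[(i : ℕ)]'(by omega), L[(i : ℕ) + 1]'hi) := by
  rw [GPath.edge]
  rfl

lemma edges_subset {L₁ u t : List Point} (h1 : L₁ ≠ []) (hn1 : L₁.Nodup)
    (hL' : u ++ L₁ ++ t ≠ []) (hn : (u ++ L₁ ++ t).Nodup) :
    (ofList L₁ h1 hn1).edges ⊆ (ofList (u ++ L₁ ++ t) hL' hn).edges := by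
  intro e he
  simp only [GPath.edges, Finset.mem_image, Finset.mem_univ, true_and] at he ⊢
  obtain ⟨i, rfl⟩ := he
  have hi : (i : ℕ) < L₁.length - 1 := i.2
  have hlen : (u ++ L₁ ++ t).length = u.length + L₁.length + t.length := by
    simp [List.length_append]
    omega
  have key : ∀ (m j : ℕ) (hj : j < L₁.length) (hm : m = u.length + j),
      (u ++ L₁ ++ t)[m]'(by omega) = L₁[j]'hj := by
    intro m j hj hm
    subst hm
    have e : ((u ++ L₁) ++ t)[u.length + j]? = L₁[j]? := by
      rw [List.append_assoc, List.getElem?_append_right (by omega)]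
      rw [show u.length + j - u.length = j from by omega, List.getElem?_append_left hj]
    rw [List.getElem?_eq_getElem (by omega), List.getElem?_eq_getElem hj] at e
    exact Option.some.inj e
  refine ⟨⟨u.length + i, by simp only [ofList]; omega⟩, ?_⟩
  rw [edge_ofList _ _ _ _ (by simp only [ofList] at *; omega),
    edge_ofList _ _ _ _ (by omega)]
  simp only []
  rw [key _ _ (by omega) rfl, key _ _ (show (i:ℕ) + 1 < L₁.length by omega) (by omega)]

lemma getLast_eq_of_concat {L M : List Point} {a : Point} (h : L = M ++ [a]) (hne : L ≠ []) :
    L.getLast hne = a := by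
  subst h
  exact List.getLast_append_singleton M

lemma ne_nil_of_head? {L : List Point} {x : Point} (h : L.head? = some x) : L ≠ [] := by
  intro hnil
  rw [hnil] at h
  simp at h

end Lemma31Aux

open Lemma31Aux

/-- Lemma 3.1(1): for a regular pair `l ∈ P` and Hanan-grid vertices `p ≤ q` in `B(l)`,
the maximum length of segments shared by an M-path for `l` and an M-path for `(p, q)`
equals the Manhattan distance `d(p, q)`. -/
theorem sharable_length_regular (P : Inst) (l : Point × Point) (hl : l ∈ P)
    (hreg : Regular l) (p q : Point)
    (hp : p ∈ hananV P) (hq : q ∈ hananV P)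
    (hpB : inBox l.1 l.2 p) (hqB : inBox l.1 l.2 q) (hpq : p ≤ q) :
    IsGreatest {x : ℝ | ∃ πl πv : GPath, InPi P l πl ∧ InPi P (p, q) πv ∧
      x = sharedLen πl πv} (manh p q) := by
  classical
  have hreg' : l.1 ≤ l.2 := ⟨hreg.1, hreg.2⟩
  have hl1p : l.1 ≤ p := by
    have h := hpB.1
    rwa [inf_eq_left.2 hreg'] at h
  have hql2 : q ≤ l.2 := by
    have h := hqB.2
    rwa [sup_eq_right.2 hreg'] at h
  have hl1V : l.1 ∈ hananV P := mem_hananV.2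
    ⟨Finset.mem_union_left _ (Finset.mem_image_of_mem _ hl),
     Finset.mem_union_left _ (Finset.mem_image_of_mem _ hl)⟩
  have hl2V : l.2 ∈ hananV P := mem_hananV.2
    ⟨Finset.mem_union_right _ (Finset.mem_image_of_mem _ hl),
     Finset.mem_union_right _ (Finset.mem_image_of_mem _ hl)⟩
  constructor
  · -- membership: construct the staircase paths
    have h3h : (stair P q l.2 ++ [l.2]).head? = some q :=
      head?_stair_append P hq hql2 rfl
    obtain ⟨t3, ht3⟩ : ∃ t3, stair P q l.2 ++ [l.2] = q :: t3 := by
      cases hc : stair P q l.2 ++ [l.2] with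
      | nil => rw [hc] at h3h; simp at h3h
      | cons a tl =>
        rw [hc] at h3h
        simp only [List.head?_cons, Option.some_inj] at h3h
        exact ⟨tl, by rw [h3h]⟩
    -- the short path list and the long path list
    have hcLv : List.Chain' (Rel P) (stair P p q ++ [q]) :=
      chain'_stair_append P hp hq hpq (List.isChain_singleton q) rfl
    have hc2 : List.Chain' (Rel P) ((stair P p q ++ [q]) ++ t3) := by
      have h := chain'_stair_append P hp hq hpq
        (chain'_stair_append P hq hl2V hql2 (List.isChain_singleton _) rfl) h3h
      rw [ht3] at h
      simpa [List.append_assoc] using h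
    have h2h : ((stair P p q ++ [q]) ++ t3).head? = some p := by
      rw [List.append_assoc]
      exact head?_stair_append P hp hpq rfl
    have hcL : List.Chain' (Rel P) (stair P l.1 p ++ (stair P p q ++ [q]) ++ t3) := by
      rw [List.append_assoc]
      have h2h' : ((stair P p q ++ [q]) ++ t3).head? = some p := h2h
      exact chain'_stair_append P hl1V hp hl1p hc2 h2h
    have hLh : (stair P l.1 p ++ (stair P p q ++ [q]) ++ t3).head? = some l.1 := by
      rw [List.append_assoc]
      exact head?_stair_append P hl1V hl1p h2h
    have hLvh : (stair P p q ++ [q]).head? = some p :=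
      head?_stair_append P hp hpq rfl
    have hLne : stair P l.1 p ++ (stair P p q ++ [q]) ++ t3 ≠ [] := ne_nil_of_head? hLh
    have hLvne : stair P p q ++ [q] ≠ [] := ne_nil_of_head? hLvh
    have hLnd := nodup_of_chain hcL
    have hLvnd := nodup_of_chain hcLv
    set πl := ofList _ hLne hLnd with hπl
    set πv := ofList _ hLvne hLvnd with hπv
    have hMl := isMPath_ofList (P := P) hLne hLnd hcL
      (head_eq_of_head? hLne hLh)
      (getLast_eq_of_concat (M := stair P l.1 p ++ stair P p q ++ stair P q l.2) (a := l.2) (by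
        simp only [List.append_assoc, List.singleton_append]
        rw [← ht3]) hLne)
      hreg'
    have hMv := isMPath_ofList (P := P) hLvne hLvnd hcLv
      (head_eq_of_head? hLvne hLvh)
      (getLast_eq_of_concat rfl hLvne)
      hpq
    refine ⟨πl, πv, ⟨hMl.1, hMl.2⟩, ⟨hMv.1, hMv.2⟩, ?_⟩
    have hsub : πv.edges ⊆ πl.edges := edges_subset hLvne hLvnd hLne hLnd
    rw [sharedLen, Finset.inter_eq_right.2 hsub, netLength_edges]
    exact hMv.1.2.2.2.symm
  · -- upper bound
    rintro x ⟨πl, πv, _, hv', rfl⟩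
    calc sharedLen πl πv ≤ netLength πv.edges := by
          rw [sharedLen]
          exact netLength_mono Finset.inter_subset_right
      _ = πv.length := netLength_edges πv
      _ = manh p q := hv'.1.2.2.2

end
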